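/- arXiv:2510.02965 — 5 statements merged into one kernel-verified Lean document; each statement's English description precedes it below -/
import Mathlib

section
/- Composite gradient mapping lower bound: Let F = f̂ + τĝ where f̂ is L_{f̂}-smooth and μ_{f̂}-strongly convex and ĝ is convex. For L ≥ L_{f̂}, let T_L(y) minimize x ↦ f̂(y) + ⟨∇f̂(y), x-y⟩ + (L/2)‖x-y‖² + τĝ(x) and r_L(y) = L(y - T_L(y)). Then for all x, y: F(x) ≥ f̂(T_L(y)) + τ ĝ(T_L(y)) + ⟨r_L(y), x - y⟩ + (μ_{f̂}/2)‖x - y‖² + (1/(2L))‖r_L(y)‖². -/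
open RealInnerProductSpace

section Aux

variable {E : Type*} [NormedAddCommGroup E] [InnerProductSpace ℝ E] [CompleteSpace E]

/-- Derivative of a smooth function along a line. -/
lemma aux_line_hasDerivAt (f : E → ℝ) (g y d : E) (t : ℝ)
    (hg : HasGradientAt f g (y + t • d)) :
    HasDerivAt (fun s : ℝ => f (y + s • d)) ⟪g, d⟫ t := by
  have h1 : HasDerivAt (fun s : ℝ => y + s • d) d t := by
    simpa using ((hasDerivAt_id t).smul_const d).const_add y
  have h2 : HasFDerivAt f (InnerProductSpace.toDual ℝ E g) (y + t • d) :=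
    hasGradientAt_iff_hasFDerivAt.mp hg
  have h3 := h2.comp_hasDerivAt_of_eq t h1 rfl
  simp [Function.comp, InnerProductSpace.toDual_apply_apply] at h3
  exact h3

/-- Gradient inequality for convex differentiable functions. -/
lemma aux_convex_grad_ineq (f : E → ℝ) (g y x : E)
    (hconv : ConvexOn ℝ Set.univ f) (hg : HasGradientAt f g y) :
    f y + ⟪g, x - y⟫ ≤ f x := by
  set d := x - y with hd
  have hg0 : HasGradientAt f g (y + (0 : ℝ) • d) := by simpa using hg
  have hline : HasDerivAt (fun s : ℝ => f (y + s • d)) ⟪g, d⟫ 0 :=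
    aux_line_hasDerivAt f g y d 0 hg0
  have hslope := hasDerivAt_iff_tendsto_slope.mp hline
  have hslope' : Filter.Tendsto (slope (fun s : ℝ => f (y + s • d)) 0)
      (nhdsWithin 0 (Set.Ioi (0:ℝ))) (nhds ⟪g, d⟫) :=
    hslope.mono_left (nhdsWithin_mono (0:ℝ)
      (fun t ht => Set.mem_compl_singleton_iff.mpr (ne_of_gt ht)))
  have key : ⟪g, d⟫ ≤ f x - f y := by
    refine le_of_tendsto hslope' ?_
    · filter_upwards [Ioc_mem_nhdsGT (zero_lt_one)] with t ht
      have ht0 : (0 : ℝ) < t := ht.1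
      have ht1 : t ≤ 1 := ht.2
      have heq : y + t • d = (1 - t) • y + t • x := by
        rw [hd, smul_sub, sub_smul, one_smul]; abel
      have hc := hconv.2 (Set.mem_univ y) (Set.mem_univ x)
        (by linarith : (0:ℝ) ≤ 1 - t) ht0.le (by ring)
      simp only [smul_eq_mul] at hc
      rw [slope_def_field]
      simp only [zero_smul, add_zero, sub_zero]
      rw [heq, div_le_iff₀ ht0]
      nlinarith [hc]
  linarith

/-- Combination identity for squared norms. -/
lemma aux_comb_sq (a b : E) (t : ℝ) :
    ‖(1 - t) • a + t • b‖ ^ 2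
      = (1 - t) * ‖a‖ ^ 2 + t * ‖b‖ ^ 2 - t * (1 - t) * ‖a - b‖ ^ 2 := by
  simp only [← real_inner_self_eq_norm_sq, inner_add_left, inner_add_right,
    inner_sub_left, inner_sub_right, real_inner_smul_left, real_inner_smul_right,
    real_inner_comm a b]
  ring

/-- Descent lemma. -/
lemma aux_descent (f : E → ℝ) (f' : E → E) (Lf : ℝ) (hLf : 0 ≤ Lf)
    (hdiff : ∀ x, HasGradientAt f (f' x) x)
    (hlip : LipschitzWith (Real.toNNReal Lf) f') (y z : E) :
    f z ≤ f y + ⟪f' y, z - y⟫ + Lf / 2 * ‖z - y‖ ^ 2 := by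
  set d := z - y with hd
  set χ : ℝ → ℝ := fun t => f (y + t • d) - t * ⟪f' y, d⟫ - Lf / 2 * ‖d‖ ^ 2 * t ^ 2 with hχ
  have hχ' : ∀ t : ℝ, HasDerivAt χ
      (⟪f' (y + t • d), d⟫ - ⟪f' y, d⟫ - Lf * ‖d‖ ^ 2 * t) t := by
    intro t
    have h1 := aux_line_hasDerivAt f (f' (y + t • d)) y d t (hdiff _)
    have h2 : HasDerivAt (fun s : ℝ => s * ⟪f' y, d⟫) ⟪f' y, d⟫ t := by
      simpa using (hasDerivAt_id t).mul_const (⟪f' y, d⟫ : ℝ)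
    have h3 : HasDerivAt (fun s : ℝ => Lf / 2 * ‖d‖ ^ 2 * s ^ 2)
        (Lf * ‖d‖ ^ 2 * t) t := by
      have := (hasDerivAt_pow 2 t).const_mul (Lf / 2 * ‖d‖ ^ 2)
      exact this.congr_deriv (by ring)
    exact (h1.sub h2).sub h3
  have hderiv_nonpos : ∀ t ∈ interior (Set.Icc (0:ℝ) 1), deriv χ t ≤ 0 := by
    intro t ht
    rw [interior_Icc] at ht
    rw [(hχ' t).deriv]
    have hb : ⟪f' (y + t • d) - f' y, d⟫ ≤ Lf * ‖d‖ ^ 2 * t := by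
      calc ⟪f' (y + t • d) - f' y, d⟫ ≤ ‖f' (y + t • d) - f' y‖ * ‖d‖ :=
            real_inner_le_norm _ _
        _ ≤ (Lf * ‖t • d‖) * ‖d‖ := by
            have := hlip.dist_le_mul (y + t • d) y
            rw [dist_eq_norm, dist_eq_norm] at this
            have hc : (Real.toNNReal Lf : ℝ) = Lf := Real.coe_toNNReal _ hLf
            have h0 : y + t • d - y = t • d := by abel
            rw [h0, hc] at this
            exact mul_le_mul_of_nonneg_right this (norm_nonneg d)
        _ = Lf * ‖d‖ ^ 2 * t := by
            rw [norm_smul, Real.norm_eq_abs, abs_of_pos ht.1]; ring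
    rw [inner_sub_left] at hb
    linarith
  have hcont : ContinuousOn χ (Set.Icc 0 1) := fun t _ =>
    ((hχ' t).continuousAt).continuousWithinAt
  have hdiffOn : DifferentiableOn ℝ χ (interior (Set.Icc (0:ℝ) 1)) := fun t _ =>
    ((hχ' t).differentiableAt).differentiableWithinAt
  have anti := antitoneOn_of_deriv_nonpos (convex_Icc 0 1) hcont hdiffOn hderiv_nonpos
  have h10 := anti (Set.left_mem_Icc.mpr zero_le_one) (Set.right_mem_Icc.mpr zero_le_one)
    zero_le_one
  have h0 : χ 0 = f y := by simp [hχ]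
  have h1 : χ 1 = f z - ⟪f' y, d⟫ - Lf / 2 * ‖d‖ ^ 2 := by
    have hyd : y + d = z := by rw [hd]; abel
    simp [hχ, hyd]
  rw [h0, h1] at h10
  linarith

end Aux

set_option maxHeartbeats 1000000 in
/-- Composite gradient mapping lower bound (Theorem 1 of the paper).
With T_L(y) the minimizer of the composite model and r_L(y) = L(y - T_L(y)),
F(x) ≥ f̂(T_L(y)) + τĝ(T_L(y)) + ⟨r_L(y), x - y⟩ + (μ/2)‖x-y‖² + (1/(2L))‖r_L(y)‖². -/
theorem composite_gradient_mapping_lower_bound (n : ℕ)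
    (fhat ghat : EuclideanSpace ℝ (Fin n) → ℝ)
    (f' : EuclideanSpace ℝ (Fin n) → EuclideanSpace ℝ (Fin n))
    (T : EuclideanSpace ℝ (Fin n) → EuclideanSpace ℝ (Fin n))
    (τ Lfhat μ L : ℝ) (hτ : 0 < τ) (hLfhat : 0 ≤ Lfhat) (hμ : 0 ≤ μ)
    (hfdiff : ∀ x, HasGradientAt fhat (f' x) x)
    (hfstrong : StrongConvexOn Set.univ μ fhat)
    (hflip : LipschitzWith (Real.toNNReal Lfhat) f')
    (hgconv : ConvexOn ℝ Set.univ ghat)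
    (hL : Lfhat ≤ L)
    (hT : ∀ y x : EuclideanSpace ℝ (Fin n),
      fhat y + ⟪f' y, T y - y⟫ + L / 2 * ‖T y - y‖ ^ 2 + τ * ghat (T y)
        ≤ fhat y + ⟪f' y, x - y⟫ + L / 2 * ‖x - y‖ ^ 2 + τ * ghat x) :
    ∀ x y : EuclideanSpace ℝ (Fin n),
      fhat x + τ * ghat x ≥
        fhat (T y) + τ * ghat (T y) + ⟪L • (y - T y), x - y⟫
          + μ / 2 * ‖x - y‖ ^ 2 + 1 / (2 * L) * ‖L • (y - T y)‖ ^ 2 := by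
  intro x y
  have hL0 : 0 ≤ L := le_trans hLfhat hL
  -- Step A : strong convexity gradient inequality
  have hA : fhat y + ⟪f' y, x - y⟫ + μ / 2 * ‖x - y‖ ^ 2 ≤ fhat x := by
    set φ : EuclideanSpace ℝ (Fin n) → ℝ := fun z => fhat z - μ / 2 * ‖z‖ ^ 2 with hφ
    have hφconv : ConvexOn ℝ Set.univ φ := strongConvexOn_iff_convex.mp hfstrong
    have hsq : HasGradientAt (fun z : EuclideanSpace ℝ (Fin n) => μ / 2 * ‖z‖ ^ 2)
        (μ • y) y := by
      rw [hasGradientAt_iff_hasFDerivAt]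
      have h := (hasStrictFDerivAt_norm_sq y).hasFDerivAt.const_mul (μ / 2)
      refine h.congr_fderiv ?_
      ext v
      simp [InnerProductSpace.toDual_apply_apply, real_inner_smul_left]
      ring
    have hφgrad : HasGradientAt φ (f' y - μ • y) y := by
      rw [hasGradientAt_iff_hasFDerivAt, map_sub]
      exact (hasGradientAt_iff_hasFDerivAt.mp (hfdiff y)).sub
        (hasGradientAt_iff_hasFDerivAt.mp hsq)
    have hkey := aux_convex_grad_ineq φ (f' y - μ • y) y x hφconv hφgrad
    simp only [hφ, inner_sub_left, real_inner_smul_left, inner_sub_right] at hkey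
    have hn : ‖x - y‖ ^ 2 = ‖x‖ ^ 2 - 2 * ⟪y, x⟫ + ‖y‖ ^ 2 := by
      rw [norm_sub_sq_real, real_inner_comm]
    have hn2 : μ / 2 * ‖x - y‖ ^ 2 = μ / 2 * ‖x‖ ^ 2 - μ * ⟪y, x⟫ + μ / 2 * ‖y‖ ^ 2 := by
      rw [hn]; ring
    have hyy : μ * ⟪y, y⟫ = μ * ‖y‖ ^ 2 := by rw [real_inner_self_eq_norm_sq y]
    have hgoal : ⟪f' y, x - y⟫ = ⟪f' y, x⟫ - ⟪f' y, y⟫ := inner_sub_right _ _ _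
    rw [hgoal, hn2]
    linarith [hkey, hyy]
  -- Step B : descent lemma
  have hB : fhat (T y) ≤ fhat y + ⟪f' y, T y - y⟫ + L / 2 * ‖T y - y‖ ^ 2 := by
    have h := aux_descent fhat f' Lfhat hLfhat hfdiff hflip y (T y)
    nlinarith [sq_nonneg ‖T y - y‖, h, hL]
  -- Step C : strong minimality of the model
  have hC : fhat y + ⟪f' y, T y - y⟫ + L / 2 * ‖T y - y‖ ^ 2 + τ * ghat (T y)
      + L / 2 * ‖x - T y‖ ^ 2
      ≤ fhat y + ⟪f' y, x - y⟫ + L / 2 * ‖x - y‖ ^ 2 + τ * ghat x := by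
    set A : ℝ := fhat y + ⟪f' y, T y - y⟫ + L / 2 * ‖T y - y‖ ^ 2 + τ * ghat (T y) with hAdef
    set B : ℝ := fhat y + ⟪f' y, x - y⟫ + L / 2 * ‖x - y‖ ^ 2 + τ * ghat x with hBdef
    have key : ∀ t ∈ Set.Ioc (0:ℝ) 1, L / 2 * (1 - t) * ‖x - T y‖ ^ 2 ≤ B - A := by
      rintro t ⟨ht0, ht1⟩
      set z : EuclideanSpace ℝ (Fin n) := (1 - t) • T y + t • x with hz
      have hTz := hT y z
      have hzy : z - y = (1 - t) • (T y - y) + t • (x - y) := by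
        simp only [hz, smul_sub, sub_smul, one_smul]; abel
      have hinner : ⟪f' y, z - y⟫ = (1 - t) * ⟪f' y, T y - y⟫ + t * ⟪f' y, x - y⟫ := by
        rw [hzy, inner_add_right, real_inner_smul_right, real_inner_smul_right]
      have hq : ‖z - y‖ ^ 2 = (1 - t) * ‖T y - y‖ ^ 2 + t * ‖x - y‖ ^ 2
          - t * (1 - t) * ‖T y - x‖ ^ 2 := by
        rw [hzy, aux_comb_sq]
        congr 3
        abel
      have hgz : τ * ghat z ≤ τ * ((1 - t) * ghat (T y) + t * ghat x) := by
        have := hgconv.2 (Set.mem_univ (T y)) (Set.mem_univ x)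
          (by linarith : (0:ℝ) ≤ 1 - t) ht0.le (by ring)
        simp only [smul_eq_mul] at this
        exact mul_le_mul_of_nonneg_left this hτ.le
      rw [hinner, hq] at hTz
      have hnn : ‖T y - x‖ = ‖x - T y‖ := norm_sub_rev _ _
      have hmul : t * (L / 2 * (1 - t) * ‖x - T y‖ ^ 2) ≤ t * (B - A) := by
        rw [hAdef, hBdef, ← hnn]
        nlinarith [hTz, hgz]
      exact le_of_mul_le_mul_left hmul ht0
    have htend : Filter.Tendsto (fun t : ℝ => L / 2 * (1 - t) * ‖x - T y‖ ^ 2)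
        (nhdsWithin 0 (Set.Ioi 0)) (nhds (L / 2 * ‖x - T y‖ ^ 2)) := by
      have hc : Continuous (fun t : ℝ => L / 2 * (1 - t) * ‖x - T y‖ ^ 2) := by
        fun_prop
      have h2 := (hc.tendsto 0).mono_left (nhdsWithin_le_nhds (s := Set.Ioi (0:ℝ)))
      simpa using h2
    have hfin : L / 2 * ‖x - T y‖ ^ 2 ≤ B - A := by
      refine le_of_tendsto htend ?_
      filter_upwards [Ioc_mem_nhdsGT (zero_lt_one)] with t ht
      exact key t ht
    rw [hAdef, hBdef] at hfin
    linarith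
  -- quadratic identity
  have hI : ⟪L • (y - T y), x - y⟫ + 1 / (2 * L) * ‖L • (y - T y)‖ ^ 2
      = L / 2 * ‖x - T y‖ ^ 2 - L / 2 * ‖x - y‖ ^ 2 := by
    rcases eq_or_lt_of_le hL0 with rfl | hLpos
    · rw [zero_smul, inner_zero_left, norm_zero]
      norm_num
    · have h1 : ‖L • (y - T y)‖ ^ 2 = L ^ 2 * ‖y - T y‖ ^ 2 := by
        rw [norm_smul, Real.norm_eq_abs, abs_of_pos hLpos, mul_pow]
      have h2 : ⟪L • (y - T y), x - y⟫ = L * ⟪y - T y, x - y⟫ :=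
        real_inner_smul_left _ _ _
      have h3 : ‖x - T y‖ ^ 2
          = ‖x - y‖ ^ 2 + 2 * ⟪y - T y, x - y⟫ + ‖y - T y‖ ^ 2 := by
        rw [show x - T y = (x - y) + (y - T y) from by abel, norm_add_sq_real,
          real_inner_comm]
      have h4 : 1 / (2 * L) * (L ^ 2 * ‖y - T y‖ ^ 2) = L / 2 * ‖y - T y‖ ^ 2 := by
        have hLne : L ≠ 0 := ne_of_gt hLpos
        field_simp
      rw [h2, h1, h4, h3]
      ring
  linarith [hA, hB, hC, hI]
end

section
/- Recursive construction preserves the estimating-sequence property: with λ_0 = 1, ψ_0 = 0, λ_{k+1} = (1-α_k)λ_k for α_k ∈ (0,1), ψ_k ≥ 0 bounded above by Ψ, and Φ_{k+1}(x) = (1-α_k)(Φ_k(x) + ψ_k(x)) - ψ_{k+1}(x) - Ψ + α_k ℓ_k(x) + α_k ψ_k(x) where ℓ_k(x) ≤ F(x) is a global lower bound on F, the sequences satisfy Φ_k(x) ≤ λ_k Φ_0(x) + (1-λ_k)(F(x) - ψ_k(x)) for all k and x. -/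
open RealInnerProductSpace

/-- The recursive construction (Lemma 2 of the paper) produces
generalized composite estimating sequences:
Φ_k(x) ≤ λ_k Φ_0(x) + (1-λ_k)(F(x) - ψ_k(x)) for all k and x. -/
theorem recursive_estimating_sequences (n : ℕ)
    (F : EuclideanSpace ℝ (Fin n) → ℝ)
    (α : ℕ → ℝ) (hα : ∀ k, α k ∈ Set.Ioo (0 : ℝ) 1)
    (hαdiv : Filter.Tendsto (fun m => ∑ k ∈ Finset.range m, α k)
      Filter.atTop Filter.atTop)
    (Ψ : ℝ)
    (ψ : ℕ → EuclideanSpace ℝ (Fin n) → ℝ)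
    (hψpos : ∀ k x, 0 ≤ ψ k x) (hψbdd : ∀ k x, ψ k x ≤ Ψ)
    (hψ0 : ∀ x, ψ 0 x = 0)
    (lam : ℕ → ℝ) (hlam0 : lam 0 = 1)
    (hlamrec : ∀ k, lam (k + 1) = (1 - α k) * lam k)
    (ℓ : ℕ → EuclideanSpace ℝ (Fin n) → ℝ)
    (hℓ : ∀ k x, ℓ k x ≤ F x)
    (Φ : ℕ → EuclideanSpace ℝ (Fin n) → ℝ)
    (hΦrec : ∀ k x, Φ (k + 1) x =
      (1 - α k) * (Φ k x + ψ k x) - ψ (k + 1) x - Ψ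
        + α k * ℓ k x + α k * ψ k x) :
    ∀ k x, Φ k x ≤ lam k * Φ 0 x + (1 - lam k) * (F x - ψ k x) := by
  have hlam : ∀ k, 0 < lam k ∧ lam k ≤ 1 := by
    intro k
    induction k with
    | zero => simp [hlam0]
    | succ k ih =>
      obtain ⟨h1, h2⟩ := ih
      obtain ⟨ha1, ha2⟩ := hα k
      rw [hlamrec k]
      constructor
      · exact mul_pos (by linarith) h1
      · nlinarith
  intro k
  induction k with
  | zero => intro x; simp [hlam0, hψ0]
  | succ k ih =>
    intro x
    have IH := ih x
    obtain ⟨ha1, ha2⟩ := hα k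
    obtain ⟨h1, h2⟩ := hlam k
    have hF := hℓ k x
    have hrec := hΦrec k x
    have hlr := hlamrec k
    have hp1 := hψpos (k+1) x
    have hp0 := hψpos k x
    have hb := hψbdd k x
    rw [hrec, hlr]
    nlinarith [mul_le_mul_of_nonneg_left IH (le_of_lt (by linarith : (0:ℝ) < 1 - α k)),
      mul_nonneg (mul_nonneg (le_of_lt (by linarith : (0:ℝ) < 1 - α k)) h1.le) hp1,
      mul_le_mul_of_nonneg_left hF ha1.le,
      mul_nonneg (mul_nonneg (by linarith : (0:ℝ) ≤ 1 - α k) (by linarith : (0:ℝ) ≤ 1 - lam k)) hp0]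
end

section
/- Under the choices L_k α_k² = γ_{k+1} and y_k chosen so that (1-α_k)[x_k - y_k + (α_k γ_k/γ_{k+1})(v_k - y_k) + (α_k²/γ_{k+1})Σ_{j<k}β_{j,k}γ_j(v_j - y_k)] = 0, the lower bound Φ*_{k+1} ≥ F(T_{L_k}(y_k)) holds, completing the induction step F(x_{k+1}) ≤ Φ*_{k+1} with x_{k+1} = T_{L_k}(y_k). -/
open RealInnerProductSpace

/-- With L α² = γ_{k+1} and y_k the weighted average
(γ_{k+1}x_k + αγ_k v_k + α²Σβγ v_j)/(γ_{k+1} + αγ_k + α²Σβγ), inequality (39)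
implies Φ*_{k+1} ≥ F(T_{L_k}(y_k)), completing the induction step. -/
theorem induction_step_lower_bound (n : ℕ) (k : ℕ)
    (γ : ℕ → ℝ) (hγ : ∀ j, 0 ≤ γ j)
    (v : ℕ → EuclideanSpace ℝ (Fin n))
    (β : ℕ → ℝ) (hβ : ∀ j, 0 ≤ β j)
    (α L γnext Φstar FT : ℝ)
    (hα : α ∈ Set.Ioo (0 : ℝ) 1) (hL : 0 < L)
    (hγnext : γnext = L * α ^ 2)
    (xk vk r y : EuclideanSpace ℝ (Fin n))
    (hy : y = (γnext + α * γ k + α ^ 2 * ∑ j ∈ Finset.Ico 1 k, β j * γ j)⁻¹ •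
      (γnext • xk + (α * γ k) • vk +
        (α ^ 2) • ∑ j ∈ Finset.Ico 1 k, (β j * γ j) • v j))
    (h39 : Φstar ≥ FT + (1 - α) * ⟪r, xk - y⟫
        + (1 / (2 * L) - α ^ 2 / (2 * γnext)) * ‖r‖ ^ 2
        + (α * γ k * (1 - α) / γnext) * ⟪vk - y, r⟫
        + (α ^ 2 * (1 - α) / γnext) *
            ∑ j ∈ Finset.Ico 1 k, β j * γ j * ⟪v j - y, r⟫) :
    Φstar ≥ FT := by
  obtain ⟨hα0, hα1⟩ := hα
  have hγpos : 0 < γnext := by rw [hγnext]; positivity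
  have hsnn : 0 ≤ α ^ 2 * ∑ j ∈ Finset.Ico 1 k, β j * γ j := by
    apply mul_nonneg (by positivity)
    exact Finset.sum_nonneg fun j _ => mul_nonneg (hβ j) (hγ j)
  have hS : 0 < γnext + α * γ k + α ^ 2 * ∑ j ∈ Finset.Ico 1 k, β j * γ j := by
    have : 0 ≤ α * γ k := mul_nonneg hα0.le (hγ k)
    linarith
  have hSy : (γnext + α * γ k + α ^ 2 * ∑ j ∈ Finset.Ico 1 k, β j * γ j) • y =
      γnext • xk + (α * γ k) • vk +
        (α ^ 2) • ∑ j ∈ Finset.Ico 1 k, (β j * γ j) • v j := by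
    rw [hy, smul_smul, mul_inv_cancel₀ hS.ne', one_smul]
  have key : γnext * ⟪xk - y, r⟫ + (α * γ k) * ⟪vk - y, r⟫
      + α ^ 2 * ∑ j ∈ Finset.Ico 1 k, β j * γ j * ⟪v j - y, r⟫ = 0 := by
    have h1 : ⟪γnext • xk + (α * γ k) • vk +
        (α ^ 2) • ∑ j ∈ Finset.Ico 1 k, (β j * γ j) • v j, r⟫ =
        (γnext + α * γ k + α ^ 2 * ∑ j ∈ Finset.Ico 1 k, β j * γ j) * ⟪y, r⟫ := by
      rw [← hSy, real_inner_smul_left]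
    simp only [inner_sub_left, inner_add_left, real_inner_smul_left, sum_inner,
      mul_sub, Finset.sum_sub_distrib, ← Finset.sum_mul] at h1 ⊢
    linear_combination h1
  have hnorm : (1 / (2 * L) - α ^ 2 / (2 * γnext)) = 0 := by
    rw [hγnext]; field_simp; ring
  have hcomm : ⟪r, xk - y⟫ = ⟪xk - y, r⟫ := real_inner_comm _ _
  rw [hnorm, hcomm] at h39
  have heq : (1 - α) * ⟪xk - y, r⟫ + 0 * ‖r‖ ^ 2
      + (α * γ k * (1 - α) / γnext) * ⟪vk - y, r⟫
      + (α ^ 2 * (1 - α) / γnext) *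
          ∑ j ∈ Finset.Ico 1 k, β j * γ j * ⟪v j - y, r⟫ = 0 := by
    have : (1 - α) * ⟪xk - y, r⟫ + 0 * ‖r‖ ^ 2
      + (α * γ k * (1 - α) / γnext) * ⟪vk - y, r⟫
      + (α ^ 2 * (1 - α) / γnext) *
          ∑ j ∈ Finset.Ico 1 k, β j * γ j * ⟪v j - y, r⟫ =
        ((1 - α) / γnext) * (γnext * ⟪xk - y, r⟫ + (α * γ k) * ⟪vk - y, r⟫
      + α ^ 2 * ∑ j ∈ Finset.Ico 1 k, β j * γ j * ⟪v j - y, r⟫) := by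
      field_simp
      ring
    rw [this, key, mul_zero]
  linarith [h39, heq]
end

section
/- Theorem: if λ_0 = 1 and λ_k = Π_{j=0}^{k-1}(1 - α_j), then the algorithm's iterates satisfy F(x_k) - F(x*) ≤ λ_k (F(x_0) - F(x*) + (γ_0/2)‖x_0 - x*‖²) - (1 - λ_k)ψ_k(x*). -/
open RealInnerProductSpace

/-- Theorem 3 of the paper. With λ_k = Π_{j=0}^{k-1}(1 - α_j) and the
generalized composite estimating sequence property, the iterates satisfy
F(x_k) - F(x*) ≤ λ_k (F(x_0) - F(x*) + (γ_0/2)‖x_0 - x*‖²) - (1 - λ_k) ψ_k(x*). -/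
theorem algorithm_convergence_bound (n : ℕ)
    (F : EuclideanSpace ℝ (Fin n) → ℝ)
    (Q : Set (EuclideanSpace ℝ (Fin n)))
    (Φ ψ : ℕ → EuclideanSpace ℝ (Fin n) → ℝ)
    (α : ℕ → ℝ) (lam : ℕ → ℝ)
    (hlam : ∀ k, lam k = ∏ j ∈ Finset.range k, (1 - α j))
    (γ0 : ℝ)
    (x0 : EuclideanSpace ℝ (Fin n)) (hx0Q : x0 ∈ Q)
    (hΦ0 : ∀ x, Φ 0 x = F x0 + γ0 / 2 * ‖x - x0‖ ^ 2)
    (hEst : ∀ k, ∀ x ∈ Q,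
      Φ k x ≤ lam k * Φ 0 x + (1 - lam k) * (F x - ψ k x))
    (xseq : ℕ → EuclideanSpace ℝ (Fin n))
    (hxseq : ∀ k, ∀ x ∈ Q, F (xseq k) ≤ Φ k x)
    (xstar : EuclideanSpace ℝ (Fin n)) (hxstarQ : xstar ∈ Q)
    (hmin : ∀ x ∈ Q, F xstar ≤ F x) :
    ∀ k, F (xseq k) - F xstar ≤
      lam k * (F x0 - F xstar + γ0 / 2 * ‖x0 - xstar‖ ^ 2)
        - (1 - lam k) * ψ k xstar := by
  intro k
  have h1 := hxseq k xstar hxstarQ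
  have h2 := hEst k xstar hxstarQ
  have h3 := hΦ0 xstar
  have hn : ‖xstar - x0‖ = ‖x0 - xstar‖ := norm_sub_rev _ _
  rw [h3, hn] at h2
  nlinarith [h1, h2]
end

section
/- Relating the decrease ratio to the curvature: with λ_{k+1} = (1-α_k)λ_k, α_k = √(γ_{k+1}/L_k), γ_{k+1} = (1-α_k)γ_k + α_k σ_k, and λ_0 = 1, one has γ_{k+1} - σ_k = λ_{k+1}(γ_0 - σ_k) when σ_k is held constant across iterations, and hence 1/√(λ_{k+1}) - 1/√(λ_k) ≥ (1/2)√(σ_k/(λ_{k+1}L_k) + (γ_0 - σ_k)/L_k). -/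
/-- With λ_{k+1} = (1-α_k)λ_k, α_k = √(γ_{k+1}/L_k),
γ_{k+1} = (1-α_k)γ_k + α_k σ and λ_0 = 1, one has γ_{k+1} - σ = λ_{k+1}(γ_0 - σ),
and 1/√λ_{k+1} - 1/√λ_k ≥ (1/2)√(σ/(λ_{k+1} L_k) + (γ_0 - σ)/L_k). -/
theorem decrease_ratio_curvature (lam γ α L : ℕ → ℝ) (σ : ℝ)
    (hlam0 : lam 0 = 1)
    (hα : ∀ k, α k ∈ Set.Ioo (0 : ℝ) 1)
    (hlamrec : ∀ k, lam (k + 1) = (1 - α k) * lam k)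
    (hγrec : ∀ k, γ (k + 1) = (1 - α k) * γ k + α k * σ)
    (hL : ∀ k, 0 < L k)
    (hαval : ∀ k, (α k) ^ 2 = γ (k + 1) / L k)
    (hγ0 : 0 ≤ γ 0) :
    (∀ k, γ (k + 1) - σ = lam (k + 1) * (γ 0 - σ)) ∧
    (∀ k, 1 / Real.sqrt (lam (k + 1)) - 1 / Real.sqrt (lam k) ≥
      1 / 2 * Real.sqrt (σ / (lam (k + 1) * L k) + (γ 0 - σ) / L k)) := by
  have hlampos : ∀ k, 0 < lam k := by
    intro k
    induction k with
    | zero => rw [hlam0]; norm_num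
    | succ n ih =>
        rw [hlamrec n]
        have h := hα n
        have : 0 < 1 - α n := by linarith [h.2]
        positivity
  have hγid : ∀ k, γ k - σ = lam k * (γ 0 - σ) := by
    intro k
    induction k with
    | zero => rw [hlam0]; ring
    | succ n ih =>
        rw [hγrec n, hlamrec n]
        linear_combination (1 - α n) * ih
  refine ⟨fun k => hγid (k + 1), fun k => ?_⟩
  have hαk := hα k
  have hαpos : 0 < α k := hαk.1
  have hα1 : α k < 1 := hαk.2
  have hLk := hL k
  have hlk := hlampos k
  have hlk1 := hlampos (k + 1)
  set a := Real.sqrt (lam (k + 1)) with ha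
  set b := Real.sqrt (lam k) with hb
  have hapos : 0 < a := Real.sqrt_pos.mpr hlk1
  have hbpos : 0 < b := Real.sqrt_pos.mpr hlk
  have ha2 : a ^ 2 = lam (k + 1) := Real.sq_sqrt hlk1.le
  have hb2 : b ^ 2 = lam k := Real.sq_sqrt hlk.le
  have hab : a ≤ b := Real.sqrt_le_sqrt (by nlinarith [hlamrec k])
  -- the argument of the sqrt equals α_k^2 / lam (k+1)
  have hγk1 : γ (k + 1) = α k ^ 2 * L k := by
    have h := hαval k
    rw [eq_div_iff hLk.ne'] at h
    linarith
  have harg : σ / (lam (k + 1) * L k) + (γ 0 - σ) / L k = α k ^ 2 / lam (k + 1) := by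
    have h1 := hγid (k + 1)
    field_simp
    linear_combination hγk1 - h1
  rw [harg]
  have hsq : Real.sqrt (α k ^ 2 / lam (k + 1)) = α k / a := by
    rw [Real.sqrt_div (by positivity), Real.sqrt_sq hαpos.le]
  rw [hsq]
  -- key algebraic facts
  have hkey : α k * b ^ 2 = b ^ 2 - a ^ 2 := by
    rw [ha2, hb2, hlamrec k]; ring
  have h2 : α k * b ≤ 2 * (b - a) := by
    have : α k * b * b = (b - a) * (b + a) := by nlinarith [hkey]
    nlinarith [this, hapos, hbpos]
  have e1 : 1/a - 1/b = (b - a)/(a*b) := by field_simp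
  have e2 : 1/2 * (α k / a) = (α k * b)/(2*(a*b)) := by field_simp
  rw [ge_iff_le, e1, e2, div_le_div_iff₀ (by positivity) (by positivity)]
  nlinarith [h2, hapos.le, hbpos.le, mul_pos hapos hbpos]
end
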